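/- Let x_k ∈ ℝⁿ, let H_k = B_k + (c + μ₁·min{1, ‖G(x_k)‖^δ})·I where B_k is symmetric positive semidefinite with ‖B_k‖ ≤ M, c > 0, μ₁ ∈ (0,1], μ₂ ∈ (0, μ₁], δ ∈ [0,1], and let x̂_k be the minimizer of x ↦ q_k(x) + ⟨ε_k, x − x_k⟩ with q_k(x) = f(x_k) + ⟨∇f(x_k), x − x_k⟩ + g(x) + (1/2)⟨x − x_k, H_k(x − x_k)⟩ and ‖ε_k‖ ≤ (μ₂/2)·min{1, ‖G(x_k)‖^δ}·‖x̂_k − x_k‖. Then ‖G(x_k)‖ ≤ (3 + M + c)·‖x̂_k − x_k‖. -/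
import Mathlib

open scoped RealInnerProductSpace

private lemma aux_subgrad' {n : ℕ} (g : EuclideanSpace ℝ (Fin n) → ℝ)
    (hg : ConvexOn ℝ Set.univ g)
    (H₀ : EuclideanSpace ℝ (Fin n) →L[ℝ] EuclideanSpace ℝ (Fin n))
    (hsym : ∀ u v, ⟪H₀ u, v⟫ = ⟪u, H₀ v⟫) (hpsd : ∀ v, 0 ≤ ⟪v, H₀ v⟫)
    (v₀ z p : EuclideanSpace ℝ (Fin n))
    (hmin : ∀ u, g p + ⟪v₀, p - z⟫ + (1/2) * ⟪p - z, H₀ (p - z)⟫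
        ≤ g u + ⟪v₀, u - z⟫ + (1/2) * ⟪u - z, H₀ (u - z)⟫)
    (u : EuclideanSpace ℝ (Fin n)) :
    0 ≤ g u - g p + ⟪v₀ + H₀ (p - z), u - p⟫ := by
  set w := u - p with hw
  set d := p - z with hd
  have h1 : ⟪d, H₀ w⟫ = ⟪w, H₀ d⟫ := by rw [← hsym d w, real_inner_comm]
  have hinner : ⟪v₀ + H₀ d, w⟫ = ⟪v₀, w⟫ + ⟪w, H₀ d⟫ := by
    rw [inner_add_left, real_inner_comm (H₀ d) w]
  have key : ∀ t : ℝ, t ∈ Set.Ioc (0:ℝ) 1 →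
      0 ≤ (g u - g p + ⟪v₀ + H₀ d, w⟫) + (t/2) * ⟪w, H₀ w⟫ := by
    intro t ht
    have hpt : p + t • w = (1 - t) • p + t • u := by rw [hw]; module
    have hgc : g (p + t • w) ≤ (1 - t) * g p + t * g u := by
      rw [hpt]
      exact hg.2 (Set.mem_univ p) (Set.mem_univ u) (by linarith [ht.2]) ht.1.le (by ring)
    have hFm := hmin (p + t • w)
    have e1 : p + t • w - z = d + t • w := by rw [hd]; module
    rw [e1] at hFm
    have e2 : ⟪v₀, d + t • w⟫ = ⟪v₀, d⟫ + t * ⟪v₀, w⟫ := by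
      rw [inner_add_right, real_inner_smul_right]
    have e3 : ⟪d + t • w, H₀ (d + t • w)⟫
        = ⟪d, H₀ d⟫ + 2*t*⟪w, H₀ d⟫ + t^2 * ⟪w, H₀ w⟫ := by
      simp only [map_add, map_smul, inner_add_left, inner_add_right,
        real_inner_smul_left, real_inner_smul_right]
      rw [h1]; ring
    rw [e2, e3] at hFm
    rw [hinner]
    have h2 : t * 0 ≤ t * ((g u - g p + (⟪v₀, w⟫ + ⟪w, H₀ d⟫)) + (t/2) * ⟪w, H₀ w⟫) := by
      nlinarith [hFm, hgc]
    linarith [le_of_mul_le_mul_left h2 ht.1]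
  by_contra hA
  push_neg at hA
  rcases (hpsd w).lt_or_eq with hC | hC
  · set A := g u - g p + ⟪v₀ + H₀ d, w⟫ with hA'
    set C := ⟪w, H₀ w⟫ with hC'
    have htpos : 0 < min 1 (-A / C) := lt_min one_pos (div_pos (by linarith) hC)
    have hkey := key _ ⟨htpos, min_le_left _ _⟩
    have hmul : min 1 (-A / C) * C ≤ (-A / C) * C :=
      mul_le_mul_of_nonneg_right (min_le_right _ _) hC.le
    rw [div_mul_cancel₀ _ hC.ne'] at hmul
    linarith
  · have := key 1 ⟨one_pos, le_refl 1⟩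
    rw [← hC] at this
    linarith

set_option maxHeartbeats 1000000 in
/-- Lemma 3 of the paper: `‖G(x_k)‖ ≤ (3 + M + c)·‖x̂_k − x_k‖`. -/
theorem stmt2 {n : ℕ}
    (f g : EuclideanSpace ℝ (Fin n) → ℝ)
    (hf : ContDiff ℝ 1 f)
    (hg : ConvexOn ℝ Set.univ g) (hgc : Continuous g)
    (proxg : EuclideanSpace ℝ (Fin n) → EuclideanSpace ℝ (Fin n))
    (hprox : ∀ x, IsMinOn (fun u => g u + (1 / 2) * ‖u - x‖ ^ 2) Set.univ (proxg x))
    (hproxU : ∀ x u, IsMinOn (fun u => g u + (1 / 2) * ‖u - x‖ ^ 2) Set.univ u → u = proxg x)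
    (G : EuclideanSpace ℝ (Fin n) → EuclideanSpace ℝ (Fin n))
    (hG : ∀ x, G x = x - proxg (x - gradient f x))
    (xk : EuclideanSpace ℝ (Fin n)) (B : EuclideanSpace ℝ (Fin n) →L[ℝ] EuclideanSpace ℝ (Fin n))
    (hBsym : ∀ u v, ⟪B u, v⟫ = ⟪u, B v⟫)
    (hBpsd : ∀ v, 0 ≤ ⟪v, B v⟫)
    (M c μ₁ μ₂ δ : ℝ) (hBM : ‖B‖ ≤ M) (hc : 0 < c)
    (hμ₁ : μ₁ ∈ Set.Ioc (0 : ℝ) 1) (hμ₂ : μ₂ ∈ Set.Ioc (0 : ℝ) μ₁)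
    (hδ : δ ∈ Set.Icc (0 : ℝ) 1)
    (H : EuclideanSpace ℝ (Fin n) →L[ℝ] EuclideanSpace ℝ (Fin n))
    (hH : H = B + (c + μ₁ * min 1 (‖G xk‖ ^ δ)) • ContinuousLinearMap.id ℝ (EuclideanSpace ℝ (Fin n)))
    (εk xhat : EuclideanSpace ℝ (Fin n))
    (hmin : IsMinOn (fun x => f xk + ⟪gradient f xk, x - xk⟫ + g x
        + (1 / 2) * ⟪x - xk, H (x - xk)⟫ + ⟪εk, x - xk⟫) Set.univ xhat)
    (herr : ‖εk‖ ≤ (μ₂ / 2) * min 1 (‖G xk‖ ^ δ) * ‖xhat - xk‖) :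
    ‖G xk‖ ≤ (3 + M + c) * ‖xhat - xk‖ := by
  set m : ℝ := min 1 (‖G xk‖ ^ δ) with hm
  have hm0 : 0 ≤ m := le_min zero_le_one (Real.rpow_nonneg (norm_nonneg _) δ)
  have hm1 : m ≤ 1 := min_le_left _ _
  have hμ₁m : μ₁ * m ≤ 1 := by nlinarith [hμ₁.1, hμ₁.2]
  have hμ₁m0 : 0 ≤ μ₁ * m := mul_nonneg hμ₁.1.le hm0
  -- prox variational inequality
  have proxVI : ∀ x u, 0 ≤ g u - g (proxg x) + ⟪proxg x - x, u - proxg x⟫ := by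
    intro x u
    have hmin' : ∀ u', g (proxg x) + ⟪(0 : EuclideanSpace ℝ (Fin n)), proxg x - x⟫
        + (1/2) * ⟪proxg x - x, (ContinuousLinearMap.id ℝ (EuclideanSpace ℝ (Fin n))) (proxg x - x)⟫
        ≤ g u' + ⟪(0 : EuclideanSpace ℝ (Fin n)), u' - x⟫
        + (1/2) * ⟪u' - x, (ContinuousLinearMap.id ℝ (EuclideanSpace ℝ (Fin n))) (u' - x)⟫ := by
      intro u'
      have h := isMinOn_iff.mp (hprox x) u' (Set.mem_univ u')
      simp only [ContinuousLinearMap.id_apply, inner_zero_left, add_zero, zero_add,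
        real_inner_self_eq_norm_sq]
      linarith [h]
    have h := aux_subgrad' g hg (ContinuousLinearMap.id ℝ (EuclideanSpace ℝ (Fin n)))
      (by intro a b; rfl) (by intro v; simp only [ContinuousLinearMap.id_apply]; exact real_inner_self_nonneg)
      0 x (proxg x) hmin' u
    simpa using h
  -- nonexpansiveness
  have nonexp : ∀ a b, ‖proxg a - proxg b‖ ≤ ‖a - b‖ := by
    intro a b
    set pa := proxg a
    set pb := proxg b
    have h1 := proxVI a pb
    have h2 := proxVI b pa
    have expand : ⟪pa - a, pb - pa⟫ + ⟪pb - b, pa - pb⟫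
        = ⟪a - b, pa - pb⟫ - ‖pa - pb‖^2 := by
      rw [← real_inner_self_eq_norm_sq]
      simp only [inner_sub_left, inner_sub_right]
      rw [real_inner_comm pb pa]
      ring
    have hkey : ‖pa - pb‖^2 ≤ ⟪a - b, pa - pb⟫ := by linarith
    rcases (norm_nonneg (pa - pb)).eq_or_lt with h0 | h0
    · rw [← h0]; exact norm_nonneg _
    · nlinarith [real_inner_le_norm (a - b) (pa - pb)]
  -- symmetry and psd of H
  have hHsym : ∀ u v, ⟪H u, v⟫ = ⟪u, H v⟫ := by
    intro u v
    rw [hH]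
    simp only [ContinuousLinearMap.add_apply, ContinuousLinearMap.coe_smul',
      Pi.smul_apply, ContinuousLinearMap.id_apply, inner_add_left, inner_add_right,
      real_inner_smul_left, real_inner_smul_right, hBsym]
  have hHpsd : ∀ v, 0 ≤ ⟪v, H v⟫ := by
    intro v
    rw [hH]
    simp only [ContinuousLinearMap.add_apply, ContinuousLinearMap.coe_smul',
      Pi.smul_apply, ContinuousLinearMap.id_apply, inner_add_right, real_inner_smul_right]
    have h1 := hBpsd v
    have h2 : (0:ℝ) ≤ ⟪v, v⟫ := real_inner_self_nonneg
    nlinarith [hc]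
  -- subgradient inequality at xhat
  have hmin' : ∀ u, g xhat + ⟪gradient f xk + εk, xhat - xk⟫
      + (1/2) * ⟪xhat - xk, H (xhat - xk)⟫
      ≤ g u + ⟪gradient f xk + εk, u - xk⟫ + (1/2) * ⟪u - xk, H (u - xk)⟫ := by
    intro u
    have h := isMinOn_iff.mp hmin u (Set.mem_univ u)
    simp only [inner_add_left]
    linarith [h]
  have hsub := fun u => aux_subgrad' g hg H hHsym hHpsd (gradient f xk + εk) xk xhat hmin' u
  set v : EuclideanSpace ℝ (Fin n) := gradient f xk + εk + H (xhat - xk) with hv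
  have hsub' : ∀ u, 0 ≤ g u - g xhat + ⟪v, u - xhat⟫ := by
    intro u
    have := hsub u
    rwa [hv]
  -- xhat is the prox of xhat - v
  have hxhat : xhat = proxg (xhat - v) := by
    apply hproxU
    rw [isMinOn_iff]
    intro u _
    have h := hsub' u
    have e : ∀ y : EuclideanSpace ℝ (Fin n),
        ‖y - (xhat - v)‖^2 = ‖y - xhat‖^2 + 2*⟪v, y - xhat⟫ + ‖v‖^2 := by
      intro y
      have hy : y - (xhat - v) = (y - xhat) + v := by module
      rw [hy, norm_add_sq_real, real_inner_comm]
    rw [e u, e xhat]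
    simp only [sub_self, norm_zero, inner_zero_right]
    nlinarith [sq_nonneg ‖u - xhat‖]
  -- final assembly
  set d : EuclideanSpace ℝ (Fin n) := xhat - xk with hdd
  have hGdecomp : G xk = (xk - xhat) + (proxg (xhat - v) - proxg (xk - gradient f xk)) := by
    rw [hG, ← hxhat]
    abel
  have hHd : H d = B d + (c + μ₁ * m) • d := by
    rw [hH]
    simp [ContinuousLinearMap.add_apply]
  have hab : (xhat - v) - (xk - gradient f xk) = ((1:ℝ) - (c + μ₁ * m)) • d - B d - εk := by
    rw [hv, hHd, hdd]
    module
  have h1 : ‖G xk‖ ≤ ‖xk - xhat‖ + ‖(xhat - v) - (xk - gradient f xk)‖ :=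
    hGdecomp ▸ (norm_add_le _ _).trans (by gcongr; exact nonexp _ _)
  have h2 : ‖((1:ℝ) - (c + μ₁ * m)) • d - B d - εk‖
      ≤ |1 - (c + μ₁ * m)| * ‖d‖ + ‖B d‖ + ‖εk‖ := by
    calc ‖((1:ℝ) - (c + μ₁ * m)) • d - B d - εk‖
        ≤ ‖((1:ℝ) - (c + μ₁ * m)) • d - B d‖ + ‖εk‖ := norm_sub_le _ _
      _ ≤ ‖((1:ℝ) - (c + μ₁ * m)) • d‖ + ‖B d‖ + ‖εk‖ := by
          linarith [norm_sub_le (((1:ℝ) - (c + μ₁ * m)) • d) (B d)]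
      _ = |1 - (c + μ₁ * m)| * ‖d‖ + ‖B d‖ + ‖εk‖ := by
          rw [norm_smul, Real.norm_eq_abs]
  have habs : |1 - (c + μ₁ * m)| ≤ 1 + c := by
    rw [abs_le]
    constructor <;> nlinarith
  have hBd : ‖B d‖ ≤ M * ‖d‖ :=
    (B.le_opNorm d).trans (mul_le_mul_of_nonneg_right hBM (norm_nonneg d))
  have hM0 : 0 ≤ M := le_trans (norm_nonneg B) hBM
  have hεk : ‖εk‖ ≤ (1/2) * ‖d‖ := by
    refine herr.trans ?_
    have : (μ₂ / 2) * m ≤ 1/2 := by nlinarith [hμ₂.1, hμ₂.2, hμ₁.2]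
    exact mul_le_mul_of_nonneg_right this (norm_nonneg d)
  have hnd : ‖xk - xhat‖ = ‖d‖ := by rw [hdd]; exact norm_sub_rev _ _
  have hd0 : 0 ≤ ‖d‖ := norm_nonneg d
  rw [hab] at h1
  rw [hnd] at h1
  nlinarith [abs_nonneg (1 - (c + μ₁ * m)), mul_le_mul_of_nonneg_right habs hd0]
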